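/- Let A and B be n×n real symmetric positive semidefinite matrices. Then for every positive integer k, Tr((A·B)^k) ≤ (Tr(A·B))^k. -/

import Mathlib

open Matrix Finset

lemma sum_pow_le_pow_sum' {m : ℕ} (x : Fin m → ℝ) (hx : ∀ i, 0 ≤ x i) (k : ℕ) (hk : 0 < k) :
    ∑ i, (x i) ^ k ≤ (∑ i, x i) ^ k := by
  obtain ⟨k, rfl⟩ := Nat.exists_eq_succ_of_ne_zero hk.ne'
  calc ∑ i, x i ^ (k + 1) ≤ ∑ i, x i * (∑ j, x j) ^ k := by
        apply Finset.sum_le_sum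
        intro i _
        rw [pow_succ']
        exact mul_le_mul_of_nonneg_left (pow_le_pow_left₀ (hx i)
          (Finset.single_le_sum (fun j _ => hx j) (Finset.mem_univ i)) k) (hx i)
    _ = (∑ i, x i) ^ (k + 1) := by rw [← Finset.sum_mul, pow_succ']

lemma trace_pow_psd {n : ℕ} {C : Matrix (Fin n) (Fin n) ℝ} (hC : C.PosSemidef) (k : ℕ)
    (hk : 0 < k) : (C ^ k).trace ≤ C.trace ^ k := by
  have hH := hC.1
  set U : Matrix (Fin n) (Fin n) ℝ := ↑hH.eigenvectorUnitary with hUdef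
  have hU : star U * U = 1 := hH.eigenvectorUnitary.2.1
  set D : Matrix (Fin n) (Fin n) ℝ := Matrix.diagonal (RCLike.ofReal ∘ hH.eigenvalues) with hDdef
  have hsp : C = U * D * star U := hH.spectral_theorem
  have hpow : ∀ m : ℕ, C ^ (m + 1) = U * D ^ (m + 1) * star U := by
    intro m
    induction m with
    | zero => simpa using hsp
    | succ m ih =>
      rw [pow_succ, ih]
      conv_lhs => rw [hsp]
      rw [show U * D ^ (m+1) * star U * (U * D * star U)
          = U * D ^ (m+1) * (star U * U) * (D * star U) by
        simp only [Matrix.mul_assoc], hU, Matrix.mul_one]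
      rw [Matrix.mul_assoc, ← Matrix.mul_assoc (D ^ (m+1)), ← pow_succ, Matrix.mul_assoc]
  have htrD : ∀ m : ℕ, (C ^ (m + 1)).trace = ∑ i, (hH.eigenvalues i) ^ (m + 1) := by
    intro m
    rw [hpow m, Matrix.trace_mul_cycle, hU, Matrix.one_mul,
      hDdef, Matrix.diagonal_pow, Matrix.trace_diagonal]
    simp
  obtain ⟨m, rfl⟩ := Nat.exists_eq_succ_of_ne_zero hk.ne'
  have htr : C.trace = ∑ i, hH.eigenvalues i := by simpa using htrD 0
  rw [htrD m, htr]
  exact sum_pow_le_pow_sum' _ (fun i => hC.eigenvalues_nonneg i) _ (Nat.succ_pos m)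

theorem trace_pow_mul_le_pow_trace {n : ℕ} (A B : Matrix (Fin n) (Fin n) ℝ)
    (hA : A.PosSemidef) (hB : B.PosSemidef) (k : ℕ) (hk : 0 < k) :
    ((A * B) ^ k).trace ≤ ((A * B).trace) ^ k := by
  obtain ⟨S, hS, hSH⟩ : ∃ S : Matrix (Fin n) (Fin n) ℝ, S * S = A ∧ Sᴴ = S := by
    open scoped MatrixOrder in
    exact ⟨CFC.sqrt A, CFC.sqrt_mul_sqrt_self A hA.nonneg, (CFC.sqrt_nonneg A).posSemidef.1⟩
  set C := S * B * S with hCdef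
  have hCpsd : C.PosSemidef := by
    have := hB.mul_mul_conjTranspose_same S
    rwa [hSH] at this
  have hABS : A * B * S = S * C := by
    rw [hCdef, ← hS]; simp only [Matrix.mul_assoc]
  have key : ∀ m : ℕ, (A * B) ^ m * S = S * C ^ m := by
    intro m
    induction m with
    | zero => simp
    | succ m ih =>
      rw [pow_succ, Matrix.mul_assoc, hABS, ← Matrix.mul_assoc, ih,
        Matrix.mul_assoc, ← pow_succ]
  obtain ⟨m, rfl⟩ := Nat.exists_eq_succ_of_ne_zero hk.ne'
  have h1 : ((A * B) ^ (m + 1)).trace = (C ^ (m + 1)).trace := by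
    calc ((A * B) ^ (m + 1)).trace = ((A * B) ^ m * S * (S * B)).trace := by
          rw [pow_succ, Matrix.mul_assoc, ← Matrix.mul_assoc S, hS]
      _ = ((S * B) * ((A * B) ^ m * S)).trace := Matrix.trace_mul_comm _ _
      _ = ((S * B) * (S * C ^ m)).trace := by rw [key]
      _ = (C ^ (m + 1)).trace := by
          rw [← Matrix.mul_assoc, ← hCdef, ← pow_succ']
  have h2 : (A * B).trace = C.trace := by
    rw [← hS, Matrix.mul_assoc, Matrix.trace_mul_comm]
  rw [h1, h2]
  exact trace_pow_psd hCpsd _ (Nat.succ_pos m)
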